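/- For ξ ∈ 𝓕̄, x ≥ 0, y > 0 and ε > 0, let M(ξ; x; y; ε) be the number of matrices γ ∈ SL₂(ℤ) for which there exists τ ∈ ℍ with Im(τ) = y, |Re(τ)| ≤ x, γτ ∈ 𝓕̄ and |γτ − ξ| ≤ ε. If 0 < ε ≤ (Im(ξ)/(100|ξ|³))², then M(ξ; x; y; ε) ≤ 2·(16π·(√(2·Im(ξ)) + √y)/√y + 100π·|ξ|³·ε^{1/2}/(y·Im(ξ)))·(4x + 13|ξ|). -/

import Mathlib

open Real

/-- The closed standard fundamental domain
`{τ ∈ ℍ : |Re τ| ≤ 1/2, |τ| ≥ 1}` viewed inside `ℂ`. -/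
def inFD (z : ℂ) : Prop :=
  0 < z.im ∧ |z.re| ≤ 1 / 2 ∧ 1 ≤ ‖z‖

/-- The fractional linear (Möbius) action of an integer matrix `[[a,b],[c,d]]` on `ℂ`. -/
noncomputable def moebius (a b c d : ℤ) (τ : ℂ) : ℂ :=
  ((a : ℂ) * τ + (b : ℂ)) / ((c : ℂ) * τ + (d : ℂ))

private lemma abs_sqrt_sub_sqrt (A B : ℝ) (hA : 0 ≤ A) (hB : 0 ≤ B) :
    |Real.sqrt A - Real.sqrt B| ≤ Real.sqrt |A - B| := by
  wlog h : B ≤ A generalizing A B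
  · rw [abs_sub_comm, abs_sub_comm A B]; exact this B A hB hA (le_of_not_ge h)
  · have h1 : Real.sqrt A ≤ Real.sqrt B + Real.sqrt (A - B) := by
      nlinarith [Real.sq_sqrt hA, Real.sq_sqrt hB, Real.sq_sqrt (by linarith : (0:ℝ) ≤ A - B),
        Real.sqrt_nonneg A, Real.sqrt_nonneg B, Real.sqrt_nonneg (A - B),
        mul_nonneg (Real.sqrt_nonneg B) (Real.sqrt_nonneg (A-B))]
    have h2 : Real.sqrt B ≤ Real.sqrt A := Real.sqrt_le_sqrt h
    rw [abs_of_nonneg (by linarith), abs_of_nonneg (by linarith)]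
    linarith

private lemma card_Icc_le (lo hi : ℤ) {L : ℝ} (hL : 0 ≤ L) (h : (hi : ℝ) - (lo : ℝ) ≤ L) :
    ((Finset.Icc lo hi).card : ℝ) ≤ L + 1 := by
  rcases le_or_gt lo hi with hle | hlt
  · rw [Int.card_Icc]
    have h1 : (0:ℤ) ≤ hi + 1 - lo := by omega
    have : ((hi + 1 - lo).toNat : ℝ) = ((hi:ℝ) + 1 - lo) := by
      rw [← Int.cast_natCast]; rw [Int.toNat_of_nonneg h1]; push_cast; ring
    rw [this]; linarith
  · rw [Int.card_Icc]
    have : (hi + 1 - lo).toNat = 0 := by omega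
    rw [this]; simpa using by linarith


private lemma arith_cy (F cc u y : ℝ) (h : (F + (cc * u)^2) * y = u) (hF : 0 ≤ F)
    (hy : 0 < y) (hu : 0 < u) : cc^2 * y * u ≤ 1 := by
  nlinarith [sq_nonneg (cc*u), mul_nonneg hF hy.le]

private lemma arith_cK2 (cc y mmε u K : ℝ) (hcy : cc^2 * y * u ≤ 1) (hu1 : mmε ≤ u)
    (hK2 : K^2 * (y * mmε) = 1) (hy : 0 < y) (hmme : 0 < mmε) : cc^2 ≤ K^2 := by
  nlinarith [mul_le_mul_of_nonneg_left hu1 (mul_nonneg (sq_nonneg cc) hy.le),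
    mul_pos hy hmme]

private lemma arith_absFG (δ s u mm ε : ℝ) (hδ : |δ| ≤ ε) (hsu : s * u ≤ 1) (hs0 : 0 ≤ s)
    (hu1 : mm - ε ≤ u) (hm : 0.86 ≤ mm) (hεm : 10000 * ε ≤ mm) (hε : 0 < ε) :
    |δ * (1 - s * (u + mm))| ≤ 3.1 * ε := by
  have hu0 : 0 < u := by linarith
  have hsm : s * mm ≤ 1.2 := by
    nlinarith [mul_nonneg hs0 (by linarith : (0:ℝ) ≤ u - (mm - ε)),
      mul_nonneg hs0 (by linarith : (0:ℝ) ≤ mm/10000 - ε)]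
  have h2 : |1 - s * (u + mm)| ≤ 2.3 := by
    rw [abs_le]
    constructor
    · nlinarith
    · nlinarith [mul_nonneg hs0 (by linarith : (0:ℝ) ≤ u + mm)]
  calc |δ * (1 - s * (u + mm))| = |δ| * |1 - s * (u + mm)| := abs_mul _ _
    _ ≤ ε * 2.3 := mul_le_mul hδ h2 (abs_nonneg _) hε.le
    _ ≤ 3.1 * ε := by linarith


private lemma arith_ymε (cc y u mmε : ℝ) (hcy : cc^2 * y * u ≤ 1) (hc1 : 1 ≤ cc^2)
    (hu1 : mmε ≤ u) (hy : 0 < y) (hu0 : 0 < u) : y * mmε ≤ 1 := by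
  nlinarith [mul_pos hy hu0]

private lemma arith_t (ε mm y Z : ℝ) (hε : 0 < ε) (hy : 0 < y) (hm : 0.86 ≤ mm)
    (hεm : 10000 * ε ≤ mm) (hε1 : 10000 * ε ≤ 1)
    (hcase : y * (mm - ε) ≤ 1 ∨ y ≤ mm + ε) (hZ : Z * ((mm - ε) / y) ≤ 2 * ε)
    (hZ0 : 0 ≤ Z) : Z ≤ 1 / 2 := by
  have hmε : 0.85 ≤ mm - ε := by linarith
  have h1 : Z * (mm - ε) ≤ 2 * ε * y := by
    have h0 : Z * (mm - ε) / y ≤ 2 * ε := by rw [mul_div_assoc]; exact hZ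
    calc Z * (mm - ε) = Z * (mm - ε) / y * y := by field_simp
      _ ≤ 2 * ε * y := mul_le_mul_of_nonneg_right h0 hy.le
  rcases hcase with h | h
  · have h2 : Z * (mm - ε) * (mm - ε) ≤ 2 * ε * y * (mm - ε) :=
      mul_le_mul_of_nonneg_right h1 (by linarith)
    have h3 : 2 * ε * (y * (mm - ε)) ≤ 2 * ε := by nlinarith
    nlinarith [hZ0, hmε]
  · have h4 : 2 * ε * y ≤ 2 * ε * (mm + ε) := by nlinarith
    nlinarith [hZ0, hmε]


set_option maxHeartbeats 1000000 in
private lemma arith_final (K E y mm AA ε ππ sqy sq2m sqmε sqε : ℝ)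
    (hy : 0 < y) (hm : 0.86 ≤ mm) (hmA : mm ≤ AA) (hA1 : 1 ≤ AA) (hε : 0 < ε)
    (hεm : 10000 * ε ≤ mm) (hε1 : 10000 * ε ≤ 1)
    (hsqy2 : sqy^2 = y) (hsqy0 : 0 < sqy)
    (hsq2m0 : 0 ≤ sq2m) (hsq2m2 : sq2m^2 = 2 * mm)
    (hsqmε0 : 0 ≤ sqmε) (hsqmε2 : sqmε^2 = mm - ε)
    (hsqε0 : 0 ≤ sqε) (hsqε2 : sqε^2 = ε) (hsqεs : sqε ≤ 1/100)
    (hK0 : 0 ≤ K) (hK1 : K * (sqy * sqmε) = 1)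
    (hE0 : 0 ≤ E) (hE2 : (E * sqy)^2 = 3.1 * ε)
    (hππ : 3 ≤ ππ) :
    2 + 2*K*(4*(K*ε + E) + 2) ≤
      2*(16*ππ*(sq2m + sqy)/sqy + 100*ππ*AA^3*sqε/(y*mm)) := by
  have hsqmεpos : 0.92 ≤ sqmε := by nlinarith
  have hsq2mlb : 1.3 ≤ sq2m := by nlinarith
  have hAA3 : 1 ≤ AA^3 := one_le_pow₀ hA1
  have hA2 : 1 ≤ AA^2 := one_le_pow₀ hA1
  have hmmAA3 : mm ≤ AA^3 := by nlinarith [mul_le_mul_of_nonneg_left hA2 (by linarith : (0:ℝ) ≤ AA)]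
  have hym : 0 < y * mm := by nlinarith
  -- claim 2 : 4K ≤ 32ππ sq2m / sqy
  have c2 : 4*K ≤ 32*ππ*sq2m/sqy := by
    rw [le_div_iff₀ hsqy0]
    have hc : (0:ℝ) < sqmε := by linarith
    refine le_of_mul_le_mul_right ?_ hc
    calc 4*K*sqy*sqmε = 4*(K*(sqy*sqmε)) := by ring
      _ = 4 := by rw [hK1]; ring
      _ ≤ 32*ππ*sq2m*sqmε := by
        have h1 : (1.19:ℝ) ≤ sq2m*sqmε := by nlinarith
        nlinarith [mul_le_mul_of_nonneg_left h1 (by linarith : (0:ℝ) ≤ 32*ππ)]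
  -- claim 3 : 8KE ≤ 100 ππ AA³ sqε/(y mm)
  have hEsqy : E * sqy ≤ 1.8 * sqε := by
    nlinarith [mul_nonneg hE0 hsqy0.le, mul_nonneg hsqε0 hsqε0]
  have c3 : 8*K*E ≤ 100*ππ*AA^3*sqε/(y*mm) := by
    rw [le_div_iff₀ hym]
    have hc : (0:ℝ) < sqmε := by linarith
    refine le_of_mul_le_mul_right ?_ hc
    have lhs_eq : 8*K*E*(y*mm)*sqmε = 8*(K*(sqy*sqmε))*(E*sqy)*mm := by
      rw [← hsqy2]; ring
    rw [lhs_eq, hK1]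
    have h1 : 8*1*(E*sqy)*mm ≤ 8*(1.8*sqε)*mm := by
      have := mul_le_mul_of_nonneg_right hEsqy (by linarith : (0:ℝ) ≤ mm)
      nlinarith
    have hX : (0:ℝ) ≤ sqε*AA^3 := mul_nonneg hsqε0 (by linarith)
    have h3' : sqε*mm ≤ sqε*AA^3 := mul_le_mul_of_nonneg_left hmmAA3 hsqε0
    have h4 : (2.76:ℝ) ≤ ππ*sqmε := by nlinarith
    have h2 : 8*(1.8*sqε)*mm ≤ 100*ππ*AA^3*sqε*sqmε := by
      have h5 := mul_le_mul_of_nonneg_right h4 hX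
      calc 8*(1.8*sqε)*mm = 14.4*(sqε*mm) := by ring
        _ ≤ 14.4*(sqε*AA^3) := by linarith
        _ ≤ (ππ*sqmε)*(sqε*AA^3)*100 := by nlinarith
        _ = 100*ππ*AA^3*sqε*sqmε := by ring
    linarith
  -- claim 4 : 8 ε K² ≤ 100 ππ AA³ sqε /(y mm)
  have c4 : 8*ε*K^2 ≤ 100*ππ*AA^3*sqε/(y*mm) := by
    rw [le_div_iff₀ hym]
    have hc : (0:ℝ) < mm - ε := by linarith
    refine le_of_mul_le_mul_right ?_ hc
    have lhs_eq : 8*ε*K^2*(y*mm)*(mm-ε) = 8*ε*mm*(K*(sqy*sqmε))^2 := by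
      rw [← hsqy2, ← hsqmε2]; ring
    rw [lhs_eq, hK1]
    have h1 : 8*ε*mm*1^2 = 8*(sqε*sqε)*mm := by rw [← hsqε2]; ring
    rw [h1]
    have hX : (0:ℝ) ≤ sqε*AA^3 := mul_nonneg hsqε0 (by linarith)
    have h3' : sqε*mm ≤ sqε*AA^3 := mul_le_mul_of_nonneg_left hmmAA3 hsqε0
    have hY : (0:ℝ) ≤ sqε*mm := mul_nonneg hsqε0 (by linarith)
    have h6 := mul_le_mul_of_nonneg_right hsqεs hY
    have h7 : (255:ℝ) ≤ 100*(ππ*(mm-ε)) := by nlinarith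
    have h8 := mul_le_mul_of_nonneg_right h7 hX
    calc 8*(sqε*sqε)*mm = 8*(sqε*(sqε*mm)) := by ring
      _ ≤ 8*((1/100)*(sqε*mm)) := by linarith
      _ ≤ 0.08*(sqε*AA^3) := by linarith
      _ ≤ 100*(ππ*(mm-ε))*(sqε*AA^3) := by linarith
      _ = 100*ππ*AA^3*sqε*(mm-ε) := by ring
  -- assemble
  have hexp : 2*(16*ππ*(sq2m + sqy)/sqy + 100*ππ*AA^3*sqε/(y*mm))
      = 32*ππ*sq2m/sqy + 32*ππ + 2*(100*ππ*AA^3*sqε/(y*mm)) := by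
    field_simp
    ring
  rw [hexp]
  have hB : 2 + 2*K*(4*(K*ε + E) + 2) = 2 + 4*K + 8*K*E + 8*ε*K^2 := by ring
  rw [hB]
  have h2 : (2:ℝ) ≤ 32*ππ - 64 := by nlinarith
  linarith [c2, c3, c4]

private lemma keyfacts (a b c d : ℤ) (hdet : a * d - b * c = 1) (τ : ℂ) {y : ℝ}
    (hy : 0 < y) (hτ : τ.im = y) :
    ((a:ℂ) - c * moebius a b c d τ) * ((c:ℂ) * τ + d) = 1 ∧
    τ * ((a:ℂ) - c * moebius a b c d τ) = (d:ℂ) * moebius a b c d τ - b ∧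
    Complex.normSq ((a:ℂ) - c * moebius a b c d τ) * y = (moebius a b c d τ).im := by
  have hdetC : (a:ℂ) * d - b * c = 1 := by exact_mod_cast hdet
  set D : ℂ := (c:ℂ) * τ + d with hD
  have hDne : D ≠ 0 := by
    intro h
    have him : (c:ℝ) * y = 0 := by
      have := congrArg Complex.im h
      simpa [hD, hτ] using this
    have hc : (c:ℝ) = 0 := by
      rcases mul_eq_zero.mp him with h' | h'
      · exact h'
      · exact absurd h' hy.ne'
    have hc0 : c = 0 := by exact_mod_cast hc
    have hd0 : (d:ℂ) = 0 := by
      simpa [hD, hc0] using h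
    have hd00 : d = 0 := by exact_mod_cast hd0
    rw [hc0, hd00] at hdet
    simp at hdet
  set p : ℂ := moebius a b c d τ with hp
  have hpD : p * D = (a:ℂ) * τ + b := by
    rw [hp, moebius, ← hD, div_mul_cancel₀ _ hDne]
  have h1 : ((a:ℂ) - c * p) * D = 1 := by
    have : ((a:ℂ) - c * p) * D = (a:ℂ) * D - c * (p * D) := by ring
    rw [this, hpD, hD]
    linear_combination hdetC
  refine ⟨h1, ?_, ?_⟩
  · have h2 : (τ * ((a:ℂ) - c * p)) * D = ((d:ℂ) * p - b) * D := by
      have e1 : (τ * ((a:ℂ) - c * p)) * D = τ * (((a:ℂ) - c*p) * D) := by ring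
      rw [e1, h1]
      have e2 : ((d:ℂ) * p - b) * D = (d:ℂ) * (p * D) - b * D := by ring
      rw [e2, hpD, hD]
      linear_combination (-τ) * hdetC
    exact mul_right_cancel₀ hDne h2
  · have him : p.im * Complex.normSq D = y := by
      have h2 : p * (Complex.normSq D : ℂ) = ((a:ℂ) * τ + b) * (starRingEnd ℂ) D := by
        rw [← Complex.mul_conj, ← mul_assoc, hpD]
      have h3 := congrArg Complex.im h2
      simp only [Complex.mul_im, Complex.ofReal_re, Complex.ofReal_im, hD, Complex.add_im,
        Complex.add_re, Complex.mul_re, Complex.intCast_re, Complex.intCast_im,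
        Complex.conj_re, Complex.conj_im] at h3
      have hdetR : (a:ℝ) * d - b * c = 1 := by exact_mod_cast hdet
      rw [hτ] at h3
      nlinarith [h3, hdetR]
    have hns1 : Complex.normSq ((a:ℂ) - c*p) * Complex.normSq D = 1 := by
      rw [← map_mul, h1, map_one]
    linear_combination (-(Complex.normSq ((a:ℂ) - c*p))) * him + (moebius a b c d τ).im * hns1

set_option maxHeartbeats 1000000 in
/-- Bound for the number `M(ξ; x; y; ε)` of matrices `γ ∈ SL₂(ℤ)` (recorded as
quadruples `(a,b,c,d)` of integers with `ad - bc = 1`) for which there exists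
`τ ∈ ℍ` with `Im τ = y`, `|Re τ| ≤ x`, `γτ ∈ 𝓕̄` and `|γτ − ξ| ≤ ε`. -/
theorem count_translating_matrices
    (ξ : ℂ) (hξ : inFD ξ) (x y ε : ℝ) (hx : 0 ≤ x) (hy : 0 < y)
    (hε : 0 < ε) (hε' : ε ≤ (ξ.im / (100 * (‖ξ‖) ^ 3)) ^ 2)
    (S : Set (ℤ × ℤ × ℤ × ℤ))
    (hS : S = {q : ℤ × ℤ × ℤ × ℤ |
      q.1 * q.2.2.2 - q.2.1 * q.2.2.1 = 1 ∧
      ∃ τ : ℂ, τ.im = y ∧ |τ.re| ≤ x ∧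
        inFD (moebius q.1 q.2.1 q.2.2.1 q.2.2.2 τ) ∧
        ‖moebius q.1 q.2.1 q.2.2.1 q.2.2.2 τ - ξ‖ ≤ ε}) :
    S.Finite ∧
    (S.ncard : ℝ) ≤
      2 * (16 * π * (Real.sqrt (2 * ξ.im) + Real.sqrt y) / Real.sqrt y
          + 100 * π * (‖ξ‖) ^ 3 * Real.sqrt ε / (y * ξ.im))
        * (4 * x + 13 * ‖ξ‖) := by
  classical
  obtain ⟨him0, hre2, habs1⟩ := hξ
  set A : ℝ := ‖ξ‖ with hAdef
  set m : ℝ := ξ.im with hmdef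
  -- ### basic numeric facts
  have hm2 : 3/4 ≤ m^2 := by
    have h1 : A^2 = ξ.re^2 + m^2 := by
      rw [hAdef, Complex.sq_norm, Complex.normSq_apply, hmdef]; ring
    have h2 : ξ.re^2 ≤ 1/4 := by
      nlinarith [(abs_le.mp hre2).1, (abs_le.mp hre2).2]
    nlinarith
  have hm : 0.86 ≤ m := by nlinarith
  have hmA : m ≤ A := le_trans (le_abs_self _) (Complex.abs_im_le_norm ξ)
  have hA1 : 1 ≤ A := habs1
  have hA0 : 0 < A := by linarith
  have hεA : ε * (10000 * A^6) ≤ m^2 := by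
    have h1 : (m / (100 * A^3))^2 = m^2 / (10000 * A^6) := by ring
    rw [h1] at hε'
    rw [div_eq_mul_inv] at hε'
    have h2 : 0 < 10000 * A^6 := by positivity
    calc ε * (10000 * A^6) ≤ (m^2 * (10000*A^6)⁻¹) * (10000*A^6) := by
          apply mul_le_mul_of_nonneg_right hε' h2.le
      _ = m^2 := by field_simp
  have hA6 : 1 ≤ A^6 := one_le_pow₀ hA1
  have hε2 : 10000 * ε ≤ m^2 := by nlinarith
  have hεm : 10000 * ε ≤ m := by
    have hA5 : 1 ≤ A^5 := one_le_pow₀ hA1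
    have hAA6 : A ≤ A^6 := by nlinarith
    have h5 : m^2 ≤ m * A^6 := by
      nlinarith [mul_le_mul_of_nonneg_left (hmA.trans hAA6) him0.le]
    nlinarith [hεA, h5, hA6]
  have hε1 : 10000 * ε ≤ 1 := by
    have h3 : m^2 ≤ A^2 := by nlinarith
    have hA4 : 1 ≤ A^4 := one_le_pow₀ hA1
    have h4 : A^2 ≤ A^6 := by nlinarith [sq_nonneg A]
    nlinarith [hεA, h3, h4, hA6]
  have hεsq : Real.sqrt ε ≤ 1/100 := by
    rw [show (1:ℝ)/100 = Real.sqrt ((1/100)^2) by rw [Real.sqrt_sq (by norm_num)]]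
    apply Real.sqrt_le_sqrt; nlinarith
  have hmε : 0.85 ≤ m - ε := by nlinarith
  -- ### constants and finite sets
  set K : ℝ := 1 / Real.sqrt (y * (m - ε)) with hKdef
  have hK0 : 0 < K := by
    rw [hKdef]; positivity
  have hK2 : K^2 * (y * (m - ε)) = 1 := by
    rw [hKdef, div_pow, one_pow, Real.sq_sqrt (by positivity)]
    field_simp
  set E : ℝ := Real.sqrt (3.1 * ε / y) with hEdef
  have hE0 : 0 ≤ E := Real.sqrt_nonneg _
  set C0 : ℤ := ⌊K⌋ with hC0def
  have hC00 : 0 ≤ C0 := by rw [hC0def]; exact Int.floor_nonneg.mpr hK0.le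
  set T0 : ℤ := ⌊2*x + 1/2⌋ with hT0def
  set g : ℤ → ℝ := fun c => Real.sqrt (max (m/y - (c:ℝ)^2 * m^2) 0) with hgdef
  set w : ℤ → ℝ := fun c => |(c:ℝ)| * ε + E with hwdef
  set AF : ℤ → Finset ℤ := fun c =>
    if c = 0 then {-1, 1} else
      Finset.Icc ⌈(c:ℝ)*ξ.re + g c - w c⌉ ⌊(c:ℝ)*ξ.re + g c + w c⌋ ∪
      Finset.Icc ⌈(c:ℝ)*ξ.re - g c - w c⌉ ⌊(c:ℝ)*ξ.re - g c + w c⌋ with hAFdef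
  set U : Finset (ℤ × ℤ) :=
    (Finset.Icc (-C0) C0).biUnion (fun c => (AF c).image (fun a => (a, c))) with hUdef
  set T : Finset ℤ := Finset.Icc (-T0) T0 with hTdef
  set base : ℤ × ℤ → ℤ × ℤ × ℤ × ℤ := fun ac =>
    if h : ∃ q', q' ∈ S ∧ q'.1 = ac.1 ∧ q'.2.2.1 = ac.2 then h.choose else (1,0,0,1)
    with hbasedef
  set tf : ℤ × ℤ × ℤ × ℤ → ℤ := fun q =>
    if q.2.2.1 = 0 then q.1 * (q.2.1 - (base (q.1, q.2.2.1)).2.1)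
    else (q.2.2.2 - (base (q.1, q.2.2.1)).2.2.2) / q.2.2.1 with htfdef
  set Φ : ℤ × ℤ × ℤ × ℤ → (ℤ × ℤ) × ℤ := fun q => ((q.1, q.2.2.1), tf q) with hΦdef
  -- ### per-element analytic facts
  have key : ∀ a b c d : ℤ, (a,b,c,d) ∈ S → ∃ τ p : ℂ,
      τ.im = y ∧ |τ.re| ≤ x ∧
      ((a:ℂ) - c * p) * ((c:ℂ) * τ + d) = 1 ∧
      τ * ((a:ℂ) - c * p) = (d:ℂ) * p - b ∧
      Complex.normSq ((a:ℂ) - c * p) * y = p.im ∧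
      m - ε ≤ p.im ∧ p.im ≤ m + ε ∧ |p.re - ξ.re| ≤ ε ∧ ‖p - ξ‖ ≤ ε := by
    intro a b c d hq
    rw [hS] at hq
    obtain ⟨hdet, τ, hτy, hτx, _, hclose⟩ := hq
    obtain ⟨k1, k2, k3⟩ := keyfacts a b c d hdet τ hy hτy
    refine ⟨τ, moebius a b c d τ, hτy, hτx, k1, k2, k3, ?_, ?_, ?_, hclose⟩
    · have h1 := (Complex.abs_im_le_norm (moebius a b c d τ - ξ)).trans hclose
      have h2 : (moebius a b c d τ - ξ).im = (moebius a b c d τ).im - m := by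
        rw [Complex.sub_im, ← hmdef]
      rw [h2] at h1
      have := abs_le.mp h1
      linarith [this.1]
    · have h1 := (Complex.abs_im_le_norm (moebius a b c d τ - ξ)).trans hclose
      have h2 : (moebius a b c d τ - ξ).im = (moebius a b c d τ).im - m := by
        rw [Complex.sub_im, ← hmdef]
      rw [h2] at h1
      have := abs_le.mp h1
      linarith [this.2]
    · have h1 := (Complex.abs_re_le_norm (moebius a b c d τ - ξ)).trans hclose
      have h2 : (moebius a b c d τ - ξ).re = (moebius a b c d τ).re - ξ.re := by
        rw [Complex.sub_re]
      rwa [h2] at h1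
  -- quadratic identity in real coordinates
  have quad : ∀ a c : ℤ, ∀ p : ℂ,
      Complex.normSq ((a:ℂ) - c * p) = ((a:ℝ) - c * p.re)^2 + ((c:ℝ) * p.im)^2 := by
    intro a c p
    rw [Complex.normSq_apply]
    have h1 : ((a:ℂ) - c*p).re = (a:ℝ) - c * p.re := by
      simp [Complex.sub_re, Complex.mul_re]
    have h2 : ((a:ℂ) - c*p).im = -((c:ℝ) * p.im) := by
      simp [Complex.sub_im, Complex.mul_im]
    rw [h1, h2]; ring
  -- ### membership of (a,c) in U
  have memU : ∀ a b c d : ℤ, (a,b,c,d) ∈ S → (a, c) ∈ U := by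
    intro a b c d hq
    obtain ⟨τ, p, hτy, hτx, k1, k2, k3, hu1, hu2, hrξ, hclose⟩ := key a b c d hq
    have hdet : a * d - b * c = 1 := by rw [hS] at hq; exact hq.1
    have hu0 : 0 < p.im := by linarith
    have hquadp : (((a:ℝ) - c * p.re)^2 + ((c:ℝ) * p.im)^2) * y = p.im := by
      rw [← quad a c p]; exact k3
    have hcy : (c:ℝ)^2 * y * p.im ≤ 1 :=
      arith_cy _ _ _ _ hquadp (sq_nonneg _) hy hu0
    have hymε : 0 < y * (m - ε) := by nlinarith
    have hcK2 : (c:ℝ)^2 ≤ K^2 :=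
      arith_cK2 _ _ _ _ _ hcy hu1 hK2 hy (by linarith)
    have hcK : |(c:ℝ)| ≤ K := by
      rw [← Real.sqrt_sq_eq_abs, ← Real.sqrt_sq hK0.le]
      exact Real.sqrt_le_sqrt hcK2
    have habsc := abs_le.mp hcK
    have hcC0 : c ∈ Finset.Icc (-C0) C0 := by
      rw [Finset.mem_Icc]
      constructor
      · have h1 : (-c) ≤ C0 := by
          rw [hC0def]; exact Int.le_floor.mpr (by push_cast; linarith)
        omega
      · rw [hC0def]; exact Int.le_floor.mpr (by push_cast; linarith)
    have haAF : a ∈ AF c := by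
      by_cases hc0 : c = 0
      · subst hc0
        have had : a * d = 1 := by linarith [hdet]
        have ha1 := Int.isUnit_iff.mp (IsUnit.of_mul_eq_one d had)
        simp only [hAFdef, if_pos rfl]
        rcases ha1 with h | h <;> simp [h]
      · have hcne : (c:ℝ) ≠ 0 := Int.cast_ne_zero.mpr hc0
        have hFy : ((a:ℝ) - c * p.re)^2 * y = p.im - (c:ℝ)^2 * y * p.im^2 := by
          linear_combination hquadp
        have hGy : (m/y - (c:ℝ)^2 * m^2) * y = m - (c:ℝ)^2 * y * m^2 := by
          field_simp
        have hs0 : 0 ≤ (c:ℝ)^2 * y := by positivity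
        have hFGy : |((a:ℝ) - c * p.re)^2 - (m/y - (c:ℝ)^2 * m^2)| * y ≤ 3.1 * ε := by
          have hexp : (((a:ℝ) - c * p.re)^2 - (m/y - (c:ℝ)^2 * m^2)) * y
              = (p.im - m) * (1 - (c:ℝ)^2 * y * (p.im + m)) := by
            linear_combination hFy - hGy
          have huδ1 : |p.im - m| ≤ ε := by rw [abs_le]; constructor <;> linarith
          calc |((a:ℝ) - c * p.re)^2 - (m/y - (c:ℝ)^2 * m^2)| * y
              = |(((a:ℝ) - c * p.re)^2 - (m/y - (c:ℝ)^2 * m^2)) * y| := by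
                rw [abs_mul, abs_of_pos hy]
            _ = |(p.im - m) * (1 - (c:ℝ)^2 * y * (p.im + m))| := by rw [hexp]
            _ ≤ 3.1 * ε := arith_absFG _ _ _ _ _ huδ1 hcy hs0 hu1 hm hεm hε
        have hFG : |((a:ℝ) - c * p.re)^2 - (m/y - (c:ℝ)^2 * m^2)| ≤ 3.1 * ε / y := by
          rw [le_div_iff₀ hy]; exact hFGy
        have hF0 : (0:ℝ) ≤ ((a:ℝ) - c * p.re)^2 := sq_nonneg _
        have hbd0 : (0:ℝ) ≤ 3.1 * ε / y := by positivity
        have hFGp : |((a:ℝ) - c * p.re)^2 - max (m/y - (c:ℝ)^2 * m^2) 0| ≤ 3.1 * ε / y := by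
          rcases le_or_gt 0 (m/y - (c:ℝ)^2 * m^2) with h | h
          · rwa [max_eq_left h]
          · rw [max_eq_right h.le]
            have h1 := abs_le.mp hFG
            rw [abs_le]; constructor
            · linarith
            · linarith [h1.2]
        have hsqF : |Real.sqrt (((a:ℝ) - c * p.re)^2) - g c| ≤ E := by
          have h1 := abs_sqrt_sub_sqrt (((a:ℝ) - c * p.re)^2)
            (max (m/y - (c:ℝ)^2 * m^2) 0) hF0 (le_max_right _ _)
          have h2 : Real.sqrt |((a:ℝ) - c * p.re)^2 - max (m/y - (c:ℝ)^2 * m^2) 0| ≤ E := by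
            rw [hEdef]; exact Real.sqrt_le_sqrt hFGp
          simp only [hgdef]
          exact h1.trans h2
        have hsqrtF : Real.sqrt (((a:ℝ) - c * p.re)^2) = |(a:ℝ) - c * p.re| :=
          Real.sqrt_sq_eq_abs _
        have hcr : |(c:ℝ) * p.re - (c:ℝ) * ξ.re| ≤ |(c:ℝ)| * ε := by
          rw [← mul_sub, abs_mul]
          exact mul_le_mul_of_nonneg_left hrξ (abs_nonneg _)
        simp only [hAFdef, if_neg hc0]
        rcases le_or_gt 0 ((a:ℝ) - c * p.re) with hsgn | hsgn
        · apply Finset.mem_union_left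
          rw [Finset.mem_Icc]
          have heq : (a:ℝ) - c * p.re = Real.sqrt (((a:ℝ) - c * p.re)^2) := by
            rw [hsqrtF, abs_of_nonneg hsgn]
          have hfinal : |(a:ℝ) - ((c:ℝ) * ξ.re + g c)| ≤ w c := by
            have hre : (a:ℝ) - ((c:ℝ) * ξ.re + g c)
                = ((c:ℝ) * p.re - (c:ℝ) * ξ.re) + (Real.sqrt (((a:ℝ) - c * p.re)^2) - g c) := by
              linear_combination heq
            rw [hre]
            simp only [hwdef]
            exact (abs_add_le _ _).trans (add_le_add hcr hsqF)
          have hab := abs_le.mp hfinal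
          constructor
          · exact Int.ceil_le.mpr (by linarith [hab.1])
          · exact Int.le_floor.mpr (by linarith [hab.2])
        · apply Finset.mem_union_right
          rw [Finset.mem_Icc]
          have heq : (a:ℝ) - c * p.re = -Real.sqrt (((a:ℝ) - c * p.re)^2) := by
            rw [hsqrtF, abs_of_neg hsgn]; ring
          have hfinal : |(a:ℝ) - ((c:ℝ) * ξ.re - g c)| ≤ w c := by
            have hre : (a:ℝ) - ((c:ℝ) * ξ.re - g c)
                = ((c:ℝ) * p.re - (c:ℝ) * ξ.re) - (Real.sqrt (((a:ℝ) - c * p.re)^2) - g c) := by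
              linear_combination heq
            rw [hre]
            simp only [hwdef]
            exact (abs_sub _ _).trans (add_le_add hcr hsqF)
          have hab := abs_le.mp hfinal
          constructor
          · exact Int.ceil_le.mpr (by linarith [hab.1])
          · exact Int.le_floor.mpr (by linarith [hab.2])
    rw [hUdef, Finset.mem_biUnion]
    exact ⟨c, hcC0, Finset.mem_image.mpr ⟨a, haAF, rfl⟩⟩
  -- ### fiber structure
  have hbase : ∀ q, q ∈ S → (base (q.1, q.2.2.1)) ∈ S ∧ (base (q.1, q.2.2.1)).1 = q.1 ∧
      (base (q.1, q.2.2.1)).2.2.1 = q.2.2.1 := by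
    intro q hq
    have hex : ∃ q', q' ∈ S ∧ q'.1 = (q.1, q.2.2.1).1 ∧ q'.2.2.1 = (q.1, q.2.2.1).2 :=
      ⟨q, hq, rfl, rfl⟩
    rw [hbasedef]
    simp only [dif_pos hex]
    exact ⟨hex.choose_spec.1, hex.choose_spec.2.1, hex.choose_spec.2.2⟩
  have hfib : ∀ q, q ∈ S → q.2.1 = (base (q.1, q.2.2.1)).2.1 + tf q * q.1 ∧
      q.2.2.2 = (base (q.1, q.2.2.1)).2.2.2 + tf q * q.2.2.1 := by
    intro q hq
    obtain ⟨hq0S, hq0a, hq0c⟩ := hbase q hq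
    obtain ⟨a, b, c, d⟩ := q
    simp only at hq0a hq0c ⊢
    have hdet : a * d - b * c = 1 := by rw [hS] at hq; exact hq.1
    have hdet0 : (base (a, c)).1 * (base (a, c)).2.2.2 -
        (base (a, c)).2.1 * (base (a, c)).2.2.1 = 1 := by
      rw [hS] at hq0S; exact hq0S.1
    rw [hq0a, hq0c] at hdet0
    by_cases hc : c = 0
    · subst hc
      have had : a * d = 1 := by linarith [hdet]
      have had0 : a * (base (a, 0)).2.2.2 = 1 := by linarith [hdet0]
      have ha1 : a = 1 ∨ a = -1 := Int.isUnit_iff.mp (IsUnit.of_mul_eq_one d had)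
      have hane : a ≠ 0 := by rcases ha1 with h | h <;> omega
      have hdd0 : d = (base (a, 0)).2.2.2 := by
        have h7 : a * d = a * (base (a, 0)).2.2.2 := by rw [had, had0]
        exact mul_left_cancel₀ hane h7
      simp only [htfdef, if_pos rfl]
      constructor
      · rcases ha1 with h | h <;> subst h <;> ring_nf <;> omega
      · rw [hdd0]; ring
    · have hsub : a * (d - (base (a, c)).2.2.2) = c * (b - (base (a, c)).2.1) := by
        linear_combination hdet - hdet0
      have hcop : IsCoprime (c:ℤ) a := ⟨-b, d, by linear_combination hdet⟩
      have hdvd : c ∣ (d - (base (a, c)).2.2.2) :=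
        hcop.dvd_of_dvd_mul_left ⟨b - (base (a, c)).2.1, hsub⟩
      have ht' : (d - (base (a, c)).2.2.2) / c * c = d - (base (a, c)).2.2.2 :=
        Int.ediv_mul_cancel hdvd
      simp only [htfdef, if_neg hc]
      constructor
      · have h7 : c * (a * ((d - (base (a, c)).2.2.2) / c)) = c * (b - (base (a, c)).2.1) := by
          linear_combination hsub + a * ht'
        have h8 := mul_left_cancel₀ hc h7
        linarith
      · linarith [ht']
  -- ### bound on t
  have ht : ∀ q, q ∈ S → tf q ∈ T := by
    intro q hq
    obtain ⟨hq0S, hq0a, hq0c⟩ := hbase q hq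
    obtain ⟨hfb, hfd⟩ := hfib q hq
    obtain ⟨a, b, c, d⟩ := q
    simp only at hq0S hq0a hq0c hfb hfd ⊢
    obtain ⟨τ, p, hτy, hτx, kk1, kk2, kk3, khu1, khu2, khrξ, khclose⟩ :=
      key (base (a,c)).1 (base (a,c)).2.1 (base (a,c)).2.2.1 (base (a,c)).2.2.2 hq0S
    rw [hq0a, hq0c] at kk1 kk2 kk3
    obtain ⟨τ', p', hτy', hτx', kk1', kk2', kk3', khu1', khu2', khrξ', khclose'⟩ :=
      key a b c d hq
    have hdet0 : (base (a,c)).1 * (base (a,c)).2.2.2 -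
        (base (a,c)).2.1 * (base (a,c)).2.2.1 = 1 := by
      rw [hS] at hq0S; exact hq0S.1
    rw [hq0a, hq0c] at hdet0
    have hdet0C : (a:ℂ) * ((base (a,c)).2.2.2 : ℂ) - ((base (a,c)).2.1 : ℂ) * (c:ℂ) = 1 := by
      exact_mod_cast hdet0
    set t : ℤ := tf (a, b, c, d) with htdef
    have hbC : (b:ℂ) = ((base (a,c)).2.1 : ℂ) + (t:ℂ) * (a:ℂ) := by exact_mod_cast hfb
    have hdC : (d:ℂ) = ((base (a,c)).2.2.2 : ℂ) + (t:ℂ) * (c:ℂ) := by exact_mod_cast hfd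
    rw [hbC, hdC] at kk2'
    -- main identity
    have hw : ((τ' + (t:ℂ)) - τ) * (((a:ℂ) - c * p)) * (((a:ℂ) - c * p')) = p' - p := by
      linear_combination ((a:ℂ) - c * p) * kk2' - ((a:ℂ) - c * p') * kk2 + (p' - p) * hdet0C
    have habs : ‖(τ' + (t:ℂ)) - τ‖
        * (‖(a:ℂ) - c * p‖ * ‖(a:ℂ) - c * p'‖)
        = ‖p' - p‖ := by
      rw [← norm_mul, ← norm_mul, ← mul_assoc, hw]
    have hp'p : ‖p' - p‖ ≤ 2 * ε := by
      calc ‖p' - p‖ ≤ ‖p' - ξ‖ + ‖ξ - p‖ :=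
            norm_sub_le_norm_sub_add_norm_sub p' ξ p
        _ = ‖p' - ξ‖ + ‖p - ξ‖ := by rw [norm_sub_rev ξ p]
        _ ≤ 2 * ε := by linarith
    have hmεy : (0:ℝ) ≤ (m - ε) / y := by positivity
    have hαlow : Real.sqrt ((m - ε) / y) ≤ ‖(a:ℂ) - c * p‖ := by
      rw [Complex.norm_def]
      apply Real.sqrt_le_sqrt
      rw [div_le_iff₀ hy]
      linarith [kk3]
    have hαlow' : Real.sqrt ((m - ε) / y) ≤ ‖(a:ℂ) - c * p'‖ := by
      rw [Complex.norm_def]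
      apply Real.sqrt_le_sqrt
      rw [div_le_iff₀ hy]
      linarith [kk3']
    have hprod : (m - ε) / y ≤ ‖(a:ℂ) - c * p‖ * ‖(a:ℂ) - c * p'‖ := by
      calc (m - ε) / y = Real.sqrt ((m - ε)/y) * Real.sqrt ((m - ε)/y) :=
            (Real.mul_self_sqrt hmεy).symm
        _ ≤ _ := mul_le_mul hαlow hαlow' (Real.sqrt_nonneg _) (norm_nonneg _)
    have hX : ‖(τ' + (t:ℂ)) - τ‖ * ((m - ε) / y) ≤ 2 * ε := by
      calc ‖(τ' + (t:ℂ)) - τ‖ * ((m - ε) / y)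
          ≤ ‖(τ' + (t:ℂ)) - τ‖
            * (‖(a:ℂ) - c * p‖ * ‖(a:ℂ) - c * p'‖) :=
            mul_le_mul_of_nonneg_left hprod (norm_nonneg _)
        _ = ‖p' - p‖ := habs
        _ ≤ 2 * ε := hp'p
    -- y bound case split
    have hcase : y * (m - ε) ≤ 1 ∨ y ≤ m + ε := by
      by_cases hc0 : c = 0
      · right
        have hz : (base (a,c)).2.1 * c = 0 := by rw [hc0, mul_zero]
        have hdet0' : a * (base (a,c)).2.2.2 = 1 := by linarith [hdet0, hz]
        have ha1 : a = 1 ∨ a = -1 := Int.isUnit_iff.mp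
          (IsUnit.of_mul_eq_one (base (a,c)).2.2.2 hdet0')
        have hns : Complex.normSq ((a:ℂ) - c * p) = 1 := by
          rw [hc0]
          rcases ha1 with h | h <;> rw [h] <;> norm_num [Complex.normSq_apply]
        rw [hns] at kk3
        linarith [kk3]
      · left
        have hquadp : (((a:ℝ) - c * p.re)^2 + ((c:ℝ) * p.im)^2) * y = p.im := by
          rw [← quad a c p]; exact kk3
        have hu0 : 0 < p.im := by linarith
        have hcy : (c:ℝ)^2 * y * p.im ≤ 1 :=
          arith_cy _ _ _ _ hquadp (sq_nonneg _) hy hu0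
        have hc1 : (1:ℝ) ≤ (c:ℝ)^2 := by
          have h1 : (1:ℤ) ≤ |c| := Int.one_le_abs hc0
          have h2 : (1:ℝ) ≤ |(c:ℝ)| := by exact_mod_cast h1
          calc (1:ℝ) ≤ |(c:ℝ)|^2 := one_le_pow₀ h2
            _ = (c:ℝ)^2 := sq_abs _
        exact arith_ymε _ _ _ _ hcy hc1 khu1 hy hu0
    have hZ12 : ‖(τ' + (t:ℂ)) - τ‖ ≤ 1/2 :=
      arith_t ε m y _ hε hy hm hεm hε1 hcase hX (norm_nonneg _)
    have hXre : |((τ' + (t:ℂ)) - τ).re| ≤ 1/2 :=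
      le_trans (Complex.abs_re_le_norm _) hZ12
    have hre_eq : ((τ' + (t:ℂ)) - τ).re = τ'.re + (t:ℝ) - τ.re := by
      simp [Complex.add_re, Complex.sub_re, Complex.intCast_re]
    rw [hre_eq] at hXre
    have habs' := abs_le.mp hXre
    have habsτ := abs_le.mp hτx
    have habsτ' := abs_le.mp hτx'
    rw [hTdef, Finset.mem_Icc]
    constructor
    · have h1 : (-t) ≤ T0 := by
        rw [hT0def]; exact Int.le_floor.mpr (by push_cast; linarith)
      omega
    · rw [hT0def]; exact Int.le_floor.mpr (by push_cast; linarith)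
  -- ### injectivity
  have hinj : Set.InjOn Φ S := by
    intro q hq q' hq' heq
    have h1 : q.1 = q'.1 := congrArg (fun z => z.1.1) heq
    have h2 : q.2.2.1 = q'.2.2.1 := congrArg (fun z => z.1.2) heq
    have h3 : tf q = tf q' := congrArg (fun z => z.2) heq
    obtain ⟨hb, hd⟩ := hfib q hq
    obtain ⟨hb', hd'⟩ := hfib q' hq'
    have hbase_eq : base (q.1, q.2.2.1) = base (q'.1, q'.2.2.1) := by rw [h1, h2]
    obtain ⟨a, b, c, d⟩ := q
    obtain ⟨a', b', c', d'⟩ := q'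
    simp only at h1 h2 h3 hb hd hb' hd' hbase_eq ⊢
    subst h1; subst h2
    rw [hbase_eq, h3] at hb hd
    rw [← hb'] at hb
    rw [← hd'] at hd
    simp [hb, hd]
  -- ### maps to
  have hmaps : ∀ q, q ∈ S → Φ q ∈ U ×ˢ T := by
    intro q hq
    rw [Finset.mem_product]
    obtain ⟨a, b, c, d⟩ := q
    exact ⟨memU a b c d hq, ht _ hq⟩
  -- ### finiteness and cardinality
  have himg : Φ '' S ⊆ ↑(U ×ˢ T) := by
    rintro z ⟨q, hq, rfl⟩
    exact hmaps q hq
  have hfin : S.Finite :=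
    Set.Finite.of_finite_image (Set.Finite.subset (U ×ˢ T).finite_toSet himg) hinj
  refine ⟨hfin, ?_⟩
  have hcard1 : (S.ncard : ℝ) ≤ ((U ×ˢ T).card : ℝ) := by
    have h1 : S.ncard = (Φ '' S).ncard := (Set.ncard_image_of_injOn hinj).symm
    have h2 : (Φ '' S).ncard ≤ (U ×ˢ T).card := by
      have h3 := Set.ncard_le_ncard himg (U ×ˢ T).finite_toSet
      rwa [Set.ncard_coe_finset] at h3
    exact_mod_cast h1 ▸ Nat.cast_le.mpr h2
  -- ### cardinality of U and T
  have hUcard : (U.card : ℝ) ≤ 2 + 2*K*(4*(K*ε + E) + 2) := by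
    have h1 : U.card ≤ ∑ c ∈ Finset.Icc (-C0) C0, ((AF c).image (fun a => (a, c))).card := by
      rw [hUdef]; exact Finset.card_biUnion_le
    have h3 : (U.card : ℝ) ≤ ∑ c ∈ Finset.Icc (-C0) C0, ((AF c).card : ℝ) := by
      calc (U.card : ℝ) ≤ ((∑ c ∈ Finset.Icc (-C0) C0,
            ((AF c).image (fun a => (a, c))).card : ℕ) : ℝ) := Nat.cast_le.mpr h1
        _ = ∑ c ∈ Finset.Icc (-C0) C0, (((AF c).image (fun a => (a, c))).card : ℝ) := by
            push_cast; ring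
        _ ≤ ∑ c ∈ Finset.Icc (-C0) C0, ((AF c).card : ℝ) :=
            Finset.sum_le_sum (fun c _ => Nat.cast_le.mpr Finset.card_image_le)
    have h0mem : (0:ℤ) ∈ Finset.Icc (-C0) C0 := by rw [Finset.mem_Icc]; omega
    have hsplit : ∑ c ∈ Finset.Icc (-C0) C0, ((AF c).card : ℝ)
        = ((AF 0).card : ℝ) + ∑ c ∈ (Finset.Icc (-C0) C0).erase 0, ((AF c).card : ℝ) :=
      (Finset.add_sum_erase _ _ h0mem).symm
    have hAF0 : ((AF 0).card : ℝ) = 2 := by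
      simp only [hAFdef, if_pos rfl]
      norm_num
    have hwnn : ∀ c : ℤ, 0 ≤ w c := by
      intro c; simp only [hwdef]; positivity
    have hterm : ∀ c ∈ (Finset.Icc (-C0) C0).erase 0,
        ((AF c).card : ℝ) ≤ 4*(K*ε + E) + 2 := by
      intro c hc
      obtain ⟨hc0, hcI⟩ := Finset.mem_erase.mp hc
      rw [Finset.mem_Icc] at hcI
      have hcabs : |(c:ℝ)| ≤ K := by
        have h4 : |c| ≤ C0 := abs_le.mpr hcI
        rw [← Int.cast_abs]
        calc ((|c| : ℤ) : ℝ) ≤ (C0 : ℝ) := by exact_mod_cast h4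
          _ ≤ K := by rw [hC0def]; exact Int.floor_le K
      have hwcb : w c ≤ K*ε + E := by
        simp only [hwdef]
        have := mul_le_mul_of_nonneg_right hcabs hε.le
        linarith
      simp only [hAFdef, if_neg hc0]
      have hca1 : ((Finset.Icc ⌈(c:ℝ)*ξ.re + g c - w c⌉ ⌊(c:ℝ)*ξ.re + g c + w c⌋).card : ℝ)
          ≤ 2*(w c) + 1 := by
        apply card_Icc_le _ _ (by linarith [hwnn c])
        have := Int.floor_le ((c:ℝ)*ξ.re + g c + w c)
        have := Int.le_ceil ((c:ℝ)*ξ.re + g c - w c)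
        linarith
      have hca2 : ((Finset.Icc ⌈(c:ℝ)*ξ.re - g c - w c⌉ ⌊(c:ℝ)*ξ.re - g c + w c⌋).card : ℝ)
          ≤ 2*(w c) + 1 := by
        apply card_Icc_le _ _ (by linarith [hwnn c])
        have := Int.floor_le ((c:ℝ)*ξ.re - g c + w c)
        have := Int.le_ceil ((c:ℝ)*ξ.re - g c - w c)
        linarith
      calc ((Finset.Icc ⌈(c:ℝ)*ξ.re + g c - w c⌉ ⌊(c:ℝ)*ξ.re + g c + w c⌋ ∪
            Finset.Icc ⌈(c:ℝ)*ξ.re - g c - w c⌉ ⌊(c:ℝ)*ξ.re - g c + w c⌋).card : ℝ)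
          ≤ ((Finset.Icc ⌈(c:ℝ)*ξ.re + g c - w c⌉ ⌊(c:ℝ)*ξ.re + g c + w c⌋).card : ℝ)
            + ((Finset.Icc ⌈(c:ℝ)*ξ.re - g c - w c⌉ ⌊(c:ℝ)*ξ.re - g c + w c⌋).card : ℝ) := by
            exact_mod_cast Finset.card_union_le _ _
        _ ≤ 2*(w c) + 1 + (2*(w c) + 1) := add_le_add hca1 hca2
        _ ≤ 4*(K*ε + E) + 2 := by linarith [hwcb]
    have hsum2 : ∑ c ∈ (Finset.Icc (-C0) C0).erase 0, ((AF c).card : ℝ)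
        ≤ ((Finset.Icc (-C0) C0).erase 0).card • (4*(K*ε + E) + 2) :=
      Finset.sum_le_card_nsmul _ _ _ hterm
    have hcardIcc : ((Finset.Icc (-C0) C0).erase 0).card = 2 * C0.toNat := by
      rw [Finset.card_erase_of_mem h0mem, Int.card_Icc]
      omega
    have hceK : (((Finset.Icc (-C0) C0).erase 0).card : ℝ) ≤ 2*K := by
      rw [hcardIcc]
      push_cast
      have h6 : (C0.toNat : ℝ) = (C0 : ℝ) := by
        rw [← Int.cast_natCast, Int.toNat_of_nonneg hC00]
      rw [h6]
      have := Int.floor_le K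
      rw [← hC0def] at this
      linarith
    have hMnn : (0:ℝ) ≤ 4*(K*ε + E) + 2 := by
      have := mul_nonneg hK0.le hε.le
      linarith
    have hsum3 : ∑ c ∈ (Finset.Icc (-C0) C0).erase 0, ((AF c).card : ℝ)
        ≤ 2*K*(4*(K*ε + E) + 2) := by
      calc ∑ c ∈ (Finset.Icc (-C0) C0).erase 0, ((AF c).card : ℝ)
          ≤ ((Finset.Icc (-C0) C0).erase 0).card • (4*(K*ε + E) + 2) := hsum2
        _ = (((Finset.Icc (-C0) C0).erase 0).card : ℝ) * (4*(K*ε + E) + 2) := by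
            rw [nsmul_eq_mul]
        _ ≤ 2*K*(4*(K*ε + E) + 2) := mul_le_mul_of_nonneg_right hceK hMnn
    calc (U.card : ℝ) ≤ ∑ c ∈ Finset.Icc (-C0) C0, ((AF c).card : ℝ) := h3
      _ = ((AF 0).card : ℝ) + ∑ c ∈ (Finset.Icc (-C0) C0).erase 0, ((AF c).card : ℝ) := hsplit
      _ ≤ 2 + 2*K*(4*(K*ε + E) + 2) := by rw [hAF0]; linarith [hsum3]
  have hTcard : (T.card : ℝ) ≤ 4*x + 2 := by
    rw [hTdef]
    have h7 := card_Icc_le (-T0) T0 (L := 4*x + 1) (by linarith) (by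
      push_cast
      have h8 := Int.floor_le (2*x + 1/2)
      rw [← hT0def] at h8
      have h9 : (0:ℝ) ≤ (T0:ℝ) + (2*x + 1/2) := by
        have h10 : (-T0 : ℤ) ≤ T0 ∨ True := Or.inr trivial
        have h11 : (-(2*x + 1/2) : ℝ) ≤ (T0 : ℝ) := by
          have h12 : (⌈-(2*x + 1/2)⌉ : ℝ) ≥ -(2*x+1/2) := Int.le_ceil _
          have h13 : ⌈-(2*x + 1/2)⌉ ≤ T0 := by
            rw [hT0def, Int.ceil_le]
            have := Int.floor_le (2*x + 1/2)
            push_cast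
            linarith [Int.sub_one_lt_floor (2*x + 1/2)]
          have h14 : ((⌈-(2*x + 1/2)⌉ : ℤ) : ℝ) ≤ ((T0 : ℤ) : ℝ) := by exact_mod_cast h13
          linarith
        linarith
      linarith)
    linarith [h7]
  -- ### final numeric assembly
  have hprodcard : ((U ×ˢ T).card : ℝ) = (U.card : ℝ) * (T.card : ℝ) := by
    rw [Finset.card_product]; push_cast; ring
  have hsqy0 : 0 < Real.sqrt y := Real.sqrt_pos.mpr hy
  have hsqmε0 : (0:ℝ) ≤ Real.sqrt (m - ε) := Real.sqrt_nonneg _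
  have hK1 : K * (Real.sqrt y * Real.sqrt (m - ε)) = 1 := by
    rw [hKdef, ← Real.sqrt_mul hy.le]
    field_simp [Real.sqrt_ne_zero'.mpr (by nlinarith : 0 < y * (m - ε))]
  have hE2 : (E * Real.sqrt y)^2 = 3.1 * ε := by
    rw [hEdef, mul_pow, Real.sq_sqrt (by positivity), Real.sq_sqrt hy.le]
    field_simp
  have hfinal := arith_final K E y m A ε π (Real.sqrt y) (Real.sqrt (2*m))
    (Real.sqrt (m - ε)) (Real.sqrt ε)
    hy hm hmA hA1 hε hεm hε1
    (Real.sq_sqrt hy.le) hsqy0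
    (Real.sqrt_nonneg _) (Real.sq_sqrt (by linarith))
    hsqmε0 (Real.sq_sqrt (by linarith))
    (Real.sqrt_nonneg _) (Real.sq_sqrt hε.le) hεsq
    hK0.le hK1
    hE0 hE2
    (by linarith [Real.pi_gt_three])
  have hBnn : (0:ℝ) ≤ 2 + 2*K*(4*(K*ε + E) + 2) := by
    have h1 : (0:ℝ) ≤ K*ε := mul_nonneg hK0.le hε.le
    have h2 : (0:ℝ) ≤ 2*K := by linarith [hK0.le]
    have h3 : (0:ℝ) ≤ 4*(K*ε + E) + 2 := by linarith
    nlinarith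
  calc (S.ncard : ℝ) ≤ ((U ×ˢ T).card : ℝ) := hcard1
    _ = (U.card : ℝ) * (T.card : ℝ) := hprodcard
    _ ≤ (2 + 2*K*(4*(K*ε + E) + 2)) * (4*x + 2) := by
        apply mul_le_mul hUcard hTcard (Nat.cast_nonneg _) hBnn
    _ ≤ (2*(16*π*(Real.sqrt (2*m) + Real.sqrt y)/Real.sqrt y
          + 100*π*A^3*Real.sqrt ε/(y*m))) * (4*x + 13*A) := by
        apply mul_le_mul hfinal (by linarith) (by linarith) (le_trans hBnn hfinal)
    _ = 2 * (16 * π * (Real.sqrt (2 * m) + Real.sqrt y) / Real.sqrt y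
          + 100 * π * A ^ 3 * Real.sqrt ε / (y * m)) * (4 * x + 13 * A) := by ring
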